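/- Let e, g : [0, +∞) → ℝ be nonnegative Lipschitz continuous functions and let λ > 0. Suppose that for almost every t > 0 the function h = e + g is differentiable at t with h'(t) ≤ -λ e(t). Then e(t) → 0 as t → +∞. -/

import Mathlib

open Filter MeasureTheory Set intervalIntegral
open scoped Topology NNReal

open Filter MeasureTheory Set intervalIntegral
open scoped Topology NNReal

/-- Derivative bound for a Lipschitz function. -/
lemma lip_abs_deriv_le {f : ℝ → ℝ} {L : NNReal} (hf : LipschitzWith L f) (t : ℝ) :
    |deriv f t| ≤ L := by
  have h := norm_fderiv_le_of_lipschitz ℝ hf (x₀ := t)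
  have h1 : deriv f t = fderiv ℝ f t 1 := (fderiv_apply_one_eq_deriv).symm
  calc |deriv f t| = ‖fderiv ℝ f t 1‖ := by rw [h1]; rfl
    _ ≤ ‖fderiv ℝ f t‖ * ‖(1:ℝ)‖ := (fderiv ℝ f t).le_opNorm 1
    _ ≤ L := by simpa using h

lemma lip_intervalIntegrable_deriv {f : ℝ → ℝ} {L : NNReal} (hf : LipschitzWith L f)
    (a b : ℝ) : IntervalIntegrable (deriv f) volume a b := by
  rw [intervalIntegrable_iff]
  refine Integrable.mono' (g := fun _ => (L : ℝ)) ?_ ?_ ?_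
  · exact integrableOn_const measure_Ioc_lt_top.ne
  · exact (measurable_deriv f).aestronglyMeasurable
  · exact Eventually.of_forall fun t => by simpa [Real.norm_eq_abs] using lip_abs_deriv_le hf t

/-- averaged integral converges to the value, quantitatively via Lipschitz. -/
lemma lip_avg_tendsto {f : ℝ → ℝ} {L : NNReal} (hf : LipschitzWith L f) (c : ℝ) :
    Tendsto (fun n : ℕ => (∫ t in c..(c + 1/(n+1 : ℝ)), f t) * (n+1 : ℝ)) atTop (𝓝 (f c)) := by
  have hc : Continuous f := hf.continuous
  have key : ∀ n : ℕ, ‖(∫ t in c..(c + 1/(n+1 : ℝ)), f t) * (n+1 : ℝ) - f c‖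
      ≤ (L : ℝ) * (1/(n+1 : ℝ)) := by
    intro n
    set δ : ℝ := 1/(n+1 : ℝ) with hδ
    have hδpos : 0 < δ := by positivity
    have hδmul : δ * (n+1 : ℝ) = 1 := by rw [hδ]; field_simp
    have hconst : (∫ _ in c..(c + δ), f c) = δ * f c := by
      rw [intervalIntegral.integral_const]
      simp [smul_eq_mul]
    have hsub : (∫ t in c..(c + δ), f t) * (n+1 : ℝ) - f c
        = (∫ t in c..(c + δ), (f t - f c)) * (n+1 : ℝ) := by
      rw [intervalIntegral.integral_sub (hc.intervalIntegrable _ _)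
        intervalIntegrable_const, hconst]
      have : (δ * (n+1 : ℝ)) * f c = f c := by rw [hδmul, one_mul]
      linarith [this, mul_comm δ (f c)]
    have hbound : ‖∫ t in c..(c + δ), (f t - f c)‖ ≤ ((L : ℝ) * δ) * |c + δ - c| := by
      apply intervalIntegral.norm_integral_le_of_norm_le_const
      intro x hx
      rw [uIoc_of_le (by linarith)] at hx
      have h1 : |f x - f c| ≤ (L : ℝ) * |x - c| := by
        have := hf.dist_le_mul x c
        simpa [Real.dist_eq] using this
      refine h1.trans ?_
      have h2 : |x - c| ≤ δ := by
        rw [abs_le]; constructor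
        · linarith [hx.1.le]
        · linarith [hx.2]
      exact mul_le_mul_of_nonneg_left h2 L.coe_nonneg
    have habs : |c + δ - c| = δ := by rw [add_sub_cancel_left, abs_of_pos hδpos]
    rw [hsub]
    rw [Real.norm_eq_abs, abs_mul]
    have hpos : |(n+1 : ℝ)| = (n+1 : ℝ) := abs_of_pos (by positivity)
    rw [hpos]
    have : |∫ t in c..(c + δ), (f t - f c)| ≤ (L : ℝ) * δ * δ := by
      rw [← Real.norm_eq_abs]
      calc ‖∫ t in c..(c + δ), (f t - f c)‖ ≤ ((L : ℝ) * δ) * |c + δ - c| := hbound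
        _ = (L : ℝ) * δ * δ := by rw [habs]
    calc |∫ t in c..(c + δ), (f t - f c)| * (n+1 : ℝ)
        ≤ ((L : ℝ) * δ * δ) * (n+1 : ℝ) := by
          exact mul_le_mul_of_nonneg_right this (by positivity)
      _ = (L : ℝ) * δ * (δ * (n+1 : ℝ)) := by ring
      _ = (L : ℝ) * δ := by rw [hδmul, mul_one]
  have hlim : Tendsto (fun n : ℕ => (L : ℝ) * (1/(n+1 : ℝ))) atTop (𝓝 0) := by
    have := tendsto_one_div_add_atTop_nhds_zero_nat (𝕜 := ℝ)
    simpa using this.const_mul (L : ℝ)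
  have := squeeze_zero_norm key hlim
  have h0 : Tendsto (fun n : ℕ => ((∫ t in c..(c + 1/(n+1 : ℝ)), f t) * (n+1 : ℝ) - f c) + f c)
      atTop (𝓝 (0 + f c)) := this.add tendsto_const_nhds
  simpa using h0

/-- FTC for Lipschitz functions. -/
lemma lip_integral_deriv_eq_sub {f : ℝ → ℝ} {L : NNReal} (hf : LipschitzWith L f)
    (a b : ℝ) : (∫ t in a..b, deriv f t) = f b - f a := by
  have hc : Continuous f := hf.continuous
  set F : ℕ → ℝ → ℝ := fun n t => (f (t + 1/(n+1 : ℝ)) - f t) * (n+1 : ℝ) with hF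
  -- Step 1: DCT
  have step1 : Tendsto (fun n => ∫ t in a..b, F n t) atTop (𝓝 (∫ t in a..b, deriv f t)) := by
    apply intervalIntegral.tendsto_integral_filter_of_dominated_convergence
      (bound := fun _ => (L : ℝ))
    · refine Eventually.of_forall fun n => ?_
      exact (((hc.comp (continuous_add_right _)).sub hc).mul continuous_const).aestronglyMeasurable
    · refine Eventually.of_forall fun n => Eventually.of_forall fun x _ => ?_
      have hδmul : (1/(n+1 : ℝ)) * (n+1 : ℝ) = 1 := by field_simp
      have h1 : |f (x + 1/(n+1 : ℝ)) - f x| ≤ (L : ℝ) * (1/(n+1 : ℝ)) := by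
        have hd := hf.dist_le_mul (x + 1/(n+1 : ℝ)) x
        have habs : |x + 1/(n+1 : ℝ) - x| = 1/(n+1 : ℝ) := by
          rw [add_sub_cancel_left, abs_of_pos (by positivity)]
        rw [Real.dist_eq, Real.dist_eq, habs] at hd
        exact hd
      rw [Real.norm_eq_abs, abs_mul, abs_of_pos (show (0:ℝ) < (n+1 : ℝ) by positivity)]
      calc |f (x + 1/(n+1 : ℝ)) - f x| * (n+1 : ℝ)
          ≤ ((L : ℝ) * (1/(n+1 : ℝ))) * (n+1 : ℝ) :=
            mul_le_mul_of_nonneg_right h1 (by positivity)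
        _ = (L : ℝ) * ((1/(n+1 : ℝ)) * (n+1 : ℝ)) := by ring
        _ = (L : ℝ) := by rw [hδmul, mul_one]
    · exact intervalIntegrable_const
    · have hae : ∀ᵐ x : ℝ, DifferentiableAt ℝ f x := hf.ae_differentiableAt_of_real
      filter_upwards [hae] with x hx _
      have hd : HasDerivAt f (deriv f x) x := hx.hasDerivAt
      rw [hasDerivAt_iff_tendsto_slope] at hd
      have hseq : Tendsto (fun n : ℕ => x + 1/(n+1 : ℝ)) atTop (𝓝[≠] x) := by
        apply tendsto_nhdsWithin_of_tendsto_nhds_of_eventually_within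
        · have := tendsto_one_div_add_atTop_nhds_zero_nat (𝕜 := ℝ)
          have h := this.const_add x
          simpa using h
        · exact Eventually.of_forall fun n => by
            simp only [mem_compl_iff, mem_singleton_iff]
            have : (0:ℝ) < 1/(n+1 : ℝ) := by positivity
            intro h; nlinarith [congrArg (· - x) h]
      have := hd.comp hseq
      apply this.congr
      intro n
      simp only [Function.comp_apply, slope_def_field, hF, add_sub_cancel_left]
      have hne : ((n:ℝ)+1) ≠ 0 := by positivity
      field_simp
  -- Step 2: compute the integrals
  have step2 : ∀ n : ℕ, (∫ t in a..b, F n t)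
      = (∫ t in b..(b + 1/(n+1 : ℝ)), f t) * (n+1 : ℝ)
        - (∫ t in a..(a + 1/(n+1 : ℝ)), f t) * (n+1 : ℝ) := by
    intro n
    set δ : ℝ := 1/(n+1 : ℝ) with hδ
    have hint : ∀ u v : ℝ, IntervalIntegrable f volume u v := fun u v =>
      hc.intervalIntegrable u v
    have h1 : (∫ t in a..b, F n t)
        = ((∫ t in a..b, f (t + δ)) - ∫ t in a..b, f t) * (n+1 : ℝ) := by
      have hcont : Continuous (fun t : ℝ => f (t + δ)) := hc.comp (continuous_add_right δ)
      simp only [hF, ← hδ]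
      rw [intervalIntegral.integral_mul_const, intervalIntegral.integral_sub
        (hcont.intervalIntegrable a b) (hint a b)]
    have h2 : (∫ t in a..b, f (t + δ)) = ∫ t in (a+δ)..(b+δ), f t :=
      intervalIntegral.integral_comp_add_right f δ
    have h3 : (∫ t in a..(a+δ), f t) + (∫ t in (a+δ)..(b+δ), f t) = ∫ t in a..(b+δ), f t :=
      intervalIntegral.integral_add_adjacent_intervals (hint _ _) (hint _ _)
    have h4 : (∫ t in a..b, f t) + (∫ t in b..(b+δ), f t) = ∫ t in a..(b+δ), f t :=
      intervalIntegral.integral_add_adjacent_intervals (hint _ _) (hint _ _)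
    rw [h1, h2]
    linear_combination (h3 - h4) * ((n:ℝ)+1)
  -- Step 3: limits of boundary terms
  have stepb : Tendsto (fun n : ℕ => (∫ t in b..(b + 1/(n+1 : ℝ)), f t) * (n+1 : ℝ))
      atTop (𝓝 (f b)) := lip_avg_tendsto hf b
  have stepa : Tendsto (fun n : ℕ => (∫ t in a..(a + 1/(n+1 : ℝ)), f t) * (n+1 : ℝ))
      atTop (𝓝 (f a)) := lip_avg_tendsto hf a
  have step3 : Tendsto (fun n => ∫ t in a..b, F n t) atTop (𝓝 (f b - f a)) := by
    have := stepb.sub stepa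
    apply this.congr
    intro n
    exact (step2 n).symm
  exact tendsto_nhds_unique step1 step3

/-- FTC inequality: Lipschitz `f` with `deriv f ≤ ψ` a.e. on `Ioc a b`. -/
lemma lip_sub_le_integral {f ψ : ℝ → ℝ} {L : NNReal} (hf : LipschitzWith L f)
    (hψ : Continuous ψ) {a b : ℝ} (hab : a ≤ b)
    (hbound : ∀ᵐ t ∂(volume.restrict (Ioc a b)), deriv f t ≤ ψ t) :
    f b - f a ≤ ∫ t in a..b, ψ t := by
  rw [← lip_integral_deriv_eq_sub hf a b]
  apply intervalIntegral.integral_mono_ae_restrict hab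
    (lip_intervalIntegrable_deriv hf a b) (hψ.intervalIntegrable a b)
  have hIoc : volume.restrict (Icc a b) = volume.restrict (Ioc a b) :=
    Measure.restrict_congr_set Ioc_ae_eq_Icc.symm
  rw [hIoc]
  exact hbound


/-- Let `e, g : [0,∞) → ℝ` be nonnegative Lipschitz functions and `λ > 0`. If at
almost every `t > 0` where `h = e + g` is differentiable one has `h'(t) ≤ -λ e(t)`,
then `e(t) → 0` as `t → +∞`. -/
theorem tendsto_zero_of_lipschitz_of_derivative_le
    (e g : ℝ → ℝ) (lam : ℝ) (hlam : 0 < lam)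
    (he_nonneg : ∀ t : ℝ, 0 ≤ t → 0 ≤ e t)
    (hg_nonneg : ∀ t : ℝ, 0 ≤ t → 0 ≤ g t)
    (he_lip : ∃ L : NNReal, LipschitzOnWith L e (Set.Ici (0 : ℝ)))
    (hg_lip : ∃ L : NNReal, LipschitzOnWith L g (Set.Ici (0 : ℝ)))
    (hderiv : ∀ᵐ t ∂(MeasureTheory.volume.restrict (Set.Ioi (0 : ℝ))),
      ∀ d : ℝ, HasDerivAt (fun s => e s + g s) d t → d ≤ -lam * e t) :
    Tendsto e atTop (nhds 0) := by
  obtain ⟨L₁, hL₁⟩ := he_lip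
  obtain ⟨L₂, hL₂⟩ := hg_lip
  -- Lipschitz extensions to all of ℝ
  have hm : LipschitzWith 1 (fun t : ℝ => max t 0) := LipschitzWith.id.max_const 0
  have hmem : ∀ t : ℝ, max t 0 ∈ Set.Ici (0:ℝ) := fun t => le_max_right t 0
  set E : ℝ → ℝ := fun t => e (max t 0) with hEdef
  set G : ℝ → ℝ := fun t => g (max t 0) with hGdef
  have hE : LipschitzWith (L₁ * 1) E := by
    rw [← lipschitzOnWith_univ]
    exact hL₁.comp (lipschitzOnWith_univ.2 hm) (fun t _ => hmem t)
  have hG : LipschitzWith (L₂ * 1) G := by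
    rw [← lipschitzOnWith_univ]
    exact hL₂.comp (lipschitzOnWith_univ.2 hm) (fun t _ => hmem t)
  set H : ℝ → ℝ := fun t => E t + G t with hHdef
  have hH : LipschitzWith (L₁ * 1 + L₂ * 1) H := hE.add hG
  have hE_nonneg : ∀ t, 0 ≤ E t := fun t => he_nonneg _ (hmem t)
  have hG_nonneg : ∀ t, 0 ≤ G t := fun t => hg_nonneg _ (hmem t)
  have hH_nonneg : ∀ t, 0 ≤ H t := fun t => add_nonneg (hE_nonneg t) (hG_nonneg t)
  have hEe : ∀ t : ℝ, 0 ≤ t → E t = e t := fun t ht => by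
    simp [hEdef, max_eq_left ht]
  -- the key dissipation inequality
  have key : ∀ a b : ℝ, 0 ≤ a → a ≤ b →
      lam * ∫ t in a..b, E t ≤ H a - H b := by
    intro a b ha hab
    have hbound : ∀ᵐ t ∂(volume.restrict (Ioc a b)), deriv H t ≤ -lam * E t := by
      have h1 : ∀ᵐ t ∂(volume.restrict (Ioc a b)), DifferentiableAt ℝ H t :=
        ae_restrict_of_ae hH.ae_differentiableAt_of_real
      have hsub : Ioc a b ⊆ Ioi (0:ℝ) := fun x hx => lt_of_le_of_lt ha hx.1
      have h2 : ∀ᵐ t ∂(volume.restrict (Ioc a b)),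
          ∀ d : ℝ, HasDerivAt (fun s => e s + g s) d t → d ≤ -lam * e t :=
        ae_restrict_of_ae_restrict_of_subset hsub hderiv
      have h3 := ae_restrict_mem (μ := volume) (measurableSet_Ioc (a := a) (b := b))
      filter_upwards [h1, h2, h3] with t hdiff hle ht
      have ht0 : 0 < t := lt_of_le_of_lt ha ht.1
      have heq : H =ᶠ[𝓝 t] (fun s => e s + g s) := by
        filter_upwards [Ioi_mem_nhds ht0] with s hs
        simp [hHdef, hEdef, hGdef, max_eq_left (le_of_lt (show (0:ℝ) < s from hs))]
      have hd : HasDerivAt (fun s => e s + g s) (deriv H t) t :=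
        (hdiff.hasDerivAt).congr_of_eventuallyEq heq.symm
      have := hle _ hd
      rwa [← hEe t (le_of_lt ht0)] at this
    have hψ : Continuous fun t => -lam * E t := continuous_const.mul hE.continuous
    have hineq := lip_sub_le_integral hH hψ hab hbound
    rw [intervalIntegral.integral_const_mul] at hineq
    linarith
  -- monotone bounded primitive
  set F : ℝ → ℝ := fun b => ∫ t in (0:ℝ)..b, E t with hFdef
  have hadj : ∀ a b : ℝ, F a + (∫ t in a..b, E t) = F b := fun a b =>
    intervalIntegral.integral_add_adjacent_intervals
      (hE.continuous.intervalIntegrable _ _) (hE.continuous.intervalIntegrable _ _)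
  have hFmono : Monotone F := by
    intro a b hab
    have hpos : 0 ≤ ∫ t in a..b, E t :=
      intervalIntegral.integral_nonneg hab (fun u _ => hE_nonneg u)
    have := hadj a b
    linarith
  have hFbdd : ∀ b, F b ≤ H 0 / lam := by
    intro b
    rcases le_total b 0 with hb | hb
    · have : F b ≤ F 0 := hFmono hb
      have hF0 : F 0 = 0 := intervalIntegral.integral_same
      have : F b ≤ 0 := by linarith
      exact this.trans (div_nonneg (hH_nonneg 0) hlam.le)
    · have hk := key 0 b le_rfl hb
      have : lam * F b ≤ H 0 := by
        have := hH_nonneg b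
        rw [hFdef]
        simp only
        linarith
      rw [le_div_iff₀ hlam]
      linarith [this]
  have htend : Tendsto F atTop (𝓝 (⨆ b, F b)) :=
    tendsto_atTop_ciSup hFmono ⟨H 0 / lam, by rintro x ⟨b, rfl⟩; exact hFbdd b⟩
  -- conclude E → 0
  have hEtend : Tendsto E atTop (𝓝 0) := by
    rw [Metric.tendsto_atTop]
    intro ε hε
    set K : ℝ := (L₁ : ℝ) * 1 + 1 with hK
    have hKpos : 0 < K := by positivity
    set w : ℝ := ε / (2 * K) with hw
    have hwpos : 0 < w := by positivity
    set c : ℝ := (ε / 2) * w with hc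
    have hcpos : 0 < c := by positivity
    obtain ⟨T, hT⟩ := (Metric.tendsto_atTop.1 htend) (c / 2) (by positivity)
    refine ⟨max T 0, fun t ht => ?_⟩
    have htT : T ≤ t := le_trans (le_max_left _ _) ht
    have ht0 : (0:ℝ) ≤ t := le_trans (le_max_right _ _) ht
    have hlt : E t < ε := by
      by_contra hcon
      push_neg at hcon
      -- E ≥ ε/2 on [t, t+w]
      have hlow : ∀ s ∈ Icc t (t + w), ε / 2 ≤ E s := by
        intro s hs
        have hd := hE.dist_le_mul s t
        rw [Real.dist_eq, Real.dist_eq] at hd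
        have h1 : |s - t| ≤ w := by
          rw [abs_le]; constructor
          · linarith [hs.1]
          · linarith [hs.2]
        have h2 : |E s - E t| ≤ K * w := by
          calc |E s - E t| ≤ ((L₁:ℝ) * 1) * |s - t| := hd
            _ ≤ K * w := by
              apply mul_le_mul _ h1 (abs_nonneg _) hKpos.le
              rw [hK]; linarith
        have hKw : K * w = ε / 2 := by
          rw [hw]; field_simp
        rw [hKw] at h2
        have := abs_le.1 h2
        linarith [this.1, this.2, hcon]
      have hint : c ≤ ∫ s in t..(t + w), E s := by
        have hmono := intervalIntegral.integral_mono_on (by linarith : t ≤ t + w)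
          (intervalIntegrable_const (μ := volume)) (hE.continuous.intervalIntegrable _ _) hlow
        rw [intervalIntegral.integral_const] at hmono
        have : (t + w - t) • (ε / 2) = c := by
          simp only [add_sub_cancel_left, smul_eq_mul]
          rw [hc]; ring
        linarith [hmono, this.symm.le]
      have hFw : F (t + w) - F t = ∫ s in t..(t + w), E s := by
        have := hadj t (t + w); linarith
      have hd1 := hT t htT
      have hd2 := hT (t + w) (by linarith)
      rw [Real.dist_eq] at hd1 hd2
      have e1 := abs_lt.1 hd1
      have e2 := abs_lt.1 hd2
      have : F (t + w) - F t < c := by linarith [e1.1, e1.2, e2.1, e2.2]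
      linarith
    have : dist (E t) 0 = E t := by
      rw [Real.dist_eq, sub_zero, abs_of_nonneg (hE_nonneg t)]
    rw [this]
    exact hlt
  have heq : e =ᶠ[atTop] E := by
    filter_upwards [eventually_ge_atTop (0:ℝ)] with t ht
    exact (hEe t ht).symm
  exact Tendsto.congr' heq.symm hEtend
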